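/- Let p be a prime and let L, M be finite abelian groups whose orders are powers of p. Then the number of subgroups K of L such that L/K is isomorphic to M equals the number of subgroups K of L that are isomorphic to M. -/

import Mathlib

namespace Stmt7Aux

/-- The character dual of a commutative group, with values in `ℂˣ`. -/
abbrev D (G : Type*) [CommGroup G] : Type _ := G →* ℂˣ

variable (G : Type*) [CommGroup G] [Finite G]

lemma hasEnough : HasEnoughRootsOfUnity ℂ (Monoid.exponent G) :=
  have : NeZero ((Monoid.exponent G : ℕ) : ℂ) :=
    ⟨Nat.cast_ne_zero.mpr Monoid.exponent_ne_zero_of_finite⟩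
  inferInstance

lemma sep {a : G} (ha : a ≠ 1) : ∃ φ : G →* ℂˣ, φ a ≠ 1 :=
  have := hasEnough G
  CommGroup.exists_apply_ne_one_of_hasEnoughRootsOfUnity G ℂ ha

lemma dualIso : Nonempty (D G ≃* G) :=
  have := hasEnough G
  CommGroup.monoidHom_mulEquiv_of_hasEnoughRootsOfUnity G ℂ

instance : Finite (D G) := Finite.of_equiv G (dualIso G).some.symm.toEquiv

lemma cardD : Nat.card (D G) = Nat.card G := Nat.card_congr (dualIso G).some.toEquiv

variable {G}

/-- The annihilator of a subgroup in the dual. -/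
def ann (K : Subgroup G) : Subgroup (D G) where
  carrier := {χ | ∀ x ∈ K, χ x = 1}
  one_mem' := fun _ _ => rfl
  mul_mem' := by
    intro a b ha hb x hx
    simp only [MonoidHom.mul_apply, ha x hx, hb x hx, mul_one]
  inv_mem' := by
    intro a ha x hx
    simp only [MonoidHom.inv_apply, ha x hx, inv_one]

lemma mem_ann {K : Subgroup G} {χ : D G} : χ ∈ ann K ↔ ∀ x ∈ K, χ x = 1 := Iff.rfl

/-- The "co-annihilator" of a subgroup of the dual. -/
def coann (J : Subgroup (D G)) : Subgroup G where
  carrier := {x | ∀ χ ∈ J, χ x = 1}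
  one_mem' := fun χ _ => map_one χ
  mul_mem' := by
    intro a b ha hb χ hχ
    rw [map_mul, ha χ hχ, hb χ hχ, mul_one]
  inv_mem' := by
    intro a ha χ hχ
    rw [map_inv, ha χ hχ, inv_one]

lemma mem_coann {J : Subgroup (D G)} {x : G} : x ∈ coann J ↔ ∀ χ ∈ J, χ x = 1 := Iff.rfl

/-- The dual of `G ⧸ K` is isomorphic to the annihilator of `K`. -/
def quotDual (K : Subgroup G) : D (G ⧸ K) ≃* ann K where
  toFun χ := ⟨χ.comp (QuotientGroup.mk' K), fun x hx => by
    show χ ((x : G ⧸ K)) = 1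
    rw [(QuotientGroup.eq_one_iff x).mpr hx, map_one]⟩
  invFun χ := QuotientGroup.lift K (χ : D G) (fun x hx => χ.2 x hx)
  left_inv χ := by
    ext x
    rfl
  right_inv χ := by
    ext x
    rfl
  map_mul' χ ψ := by
    ext x
    rfl

lemma coann_ann [Finite G] (K : Subgroup G) : coann (ann K) = K := by
  refine le_antisymm ?_ (fun x hx χ hχ => hχ x hx)
  intro x hx
  by_contra hxK
  have h1 : ((x : G ⧸ K)) ≠ 1 := fun h => hxK ((QuotientGroup.eq_one_iff x).mp h)
  obtain ⟨φ, hφ⟩ := sep (G ⧸ K) h1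
  refine hφ (hx (φ.comp (QuotientGroup.mk' K)) (fun y hy => ?_))
  show φ ((y : G ⧸ K)) = 1
  rw [(QuotientGroup.eq_one_iff y).mpr hy, map_one]

variable (G)

/-- The evaluation map into the double dual. -/
def ev : G →* D (D G) where
  toFun x :=
    { toFun := fun χ => χ x
      map_one' := rfl
      map_mul' := fun _ _ => rfl }
  map_one' := MonoidHom.ext fun χ => map_one χ
  map_mul' x y := MonoidHom.ext fun χ => map_mul χ x y

lemma ev_bijective : Function.Bijective (ev G) := by
  refine (Nat.bijective_iff_injective_and_card _).mpr ⟨?_, by rw [cardD, cardD]⟩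
  rw [injective_iff_map_eq_one]
  intro x hx
  by_contra h
  obtain ⟨φ, hφ⟩ := sep G h
  exact hφ (DFunLike.congr_fun hx φ)

variable {G}

lemma ann_coann (J : Subgroup (D G)) : ann (coann J) = J := by
  have hs := (ev_bijective G).surjective
  have key : Subgroup.map (ev G) (coann J) = ann (G := D G) J := by
    ext Ψ
    constructor
    · rintro ⟨x, hx, rfl⟩ χ hχ
      exact hx χ hχ
    · intro hΨ
      obtain ⟨x, rfl⟩ := hs Ψ
      exact ⟨x, fun χ hχ => hΨ χ hχ, rfl⟩
  have hA : coann (ann (G := D G) J) = J := coann_ann (G := D G) J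
  rw [← key] at hA
  have hB : ann (coann J) = coann (Subgroup.map (ev G) (coann J)) := by
    ext χ
    constructor
    · rintro h Ψ ⟨x, hx, rfl⟩
      exact h x hx
    · intro h x hx
      exact h (ev G x) ⟨x, hx, rfl⟩
  rw [hB]
  exact hA

lemma annIso [Finite G] (K : Subgroup G) : Nonempty ((ann K) ≃* (G ⧸ K)) :=
  ⟨(quotDual K).symm.trans (dualIso (G ⧸ K)).some⟩

end Stmt7Aux

open Stmt7Aux in
theorem stmt7 (p : ℕ) (hp : p.Prime) (L M : Type*)
    [CommGroup L] [CommGroup M] [Finite L] [Finite M]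
    (hL : IsPGroup p L) (hM : IsPGroup p M) :
    Nat.card {K : Subgroup L // Nonempty ((L ⧸ K) ≃* M)} =
    Nat.card {K : Subgroup L // Nonempty (K ≃* M)} := by
  have eqv1 : {K : Subgroup L // Nonempty ((L ⧸ K) ≃* M)} ≃
      {J : Subgroup (D L) // Nonempty (J ≃* M)} :=
    { toFun := fun ⟨K, hK⟩ => ⟨ann K, ⟨((annIso K).some).trans hK.some⟩⟩
      invFun := fun ⟨J, hJ⟩ => ⟨coann J,
        ⟨(annIso (coann J)).some.symm.trans
          ((MulEquiv.subgroupCongr (ann_coann J)).trans hJ.some)⟩⟩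
      left_inv := fun ⟨K, _⟩ => Subtype.ext (coann_ann K)
      right_inv := fun ⟨J, _⟩ => Subtype.ext (ann_coann J) }
  obtain ⟨e⟩ := dualIso L
  have hmapinv : ∀ (J : Subgroup (D L)),
      (J.map (e : D L →* L)).map (e.symm : L →* D L) = J := fun J => by
    ext x
    simp [Subgroup.mem_map_equiv]
  have hmapinv' : ∀ (K : Subgroup L),
      (K.map (e.symm : L →* D L)).map (e : D L →* L) = K := fun K => by
    ext x
    simp [Subgroup.mem_map_equiv]
  have eqv2 : {J : Subgroup (D L) // Nonempty (J ≃* M)} ≃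
      {K : Subgroup L // Nonempty (K ≃* M)} :=
    { toFun := fun ⟨J, hJ⟩ => ⟨J.map (e : D L →* L), ⟨(e.subgroupMap J).symm.trans hJ.some⟩⟩
      invFun := fun ⟨K, hK⟩ => ⟨K.map (e.symm : L →* D L),
        ⟨(K.equivMapOfInjective (e.symm : L →* D L) e.symm.injective).symm.trans hK.some⟩⟩
      left_inv := fun ⟨J, _⟩ => Subtype.ext (hmapinv J)
      right_inv := fun ⟨K, _⟩ => Subtype.ext (hmapinv' K) }
  exact Nat.card_congr (eqv1.trans eqv2)
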